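/- arXiv:2508.21387 — 3 statements merged into one kernel-verified Lean document; each statement's English description precedes it below -/
import Mathlib

section
/- Every injective endomorphism e of B_Z^{F²} fixing (0,0,[0)) is of the form α_{k,p} for some positive integer k and p ∈ {0,…,k−1}, or of the form β_{k,p} for some integer k ≥ 2 and p ∈ {1,…,k−1}. -/
/-- Elements of `B_Z^{F²}`: `(i, j, q)` encodes `(i, j, [q))` with `q ∈ {0,1}`. -/
abbrev BZF : Type := ℤ × ℤ × Fin 2

/-- Convert an integer `v ∈ {0,1}` (value of `max`-computations on ray indices)
back to the index of the ray `[v)`. -/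
def famOfInt (v : ℤ) : Fin 2 := if v ≤ 0 then 0 else 1

/-- The semigroup operation on `B_Z^{F²}`: the third coordinates are combined via
shift `n + [a) = [max (a+n) 0)` and intersection `[a) ∩ [b) = [max a b)`. -/
def bzMul (x y : BZF) : BZF :=
  if x.2.1 ≤ y.1 then
    (x.1 - x.2.1 + y.1, y.2.1,
      famOfInt (max (max (((x.2.2 : ℕ) : ℤ) + x.2.1 - y.1) 0) ((y.2.2 : ℕ) : ℤ)))
  else
    (x.1, x.2.1 - y.1 + y.2.1,
      famOfInt (max ((x.2.2 : ℕ) : ℤ) (max (((y.2.2 : ℕ) : ℤ) + y.1 - x.2.1) 0)))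

/-- Endomorphism predicate for maps of `B_Z^{F²}`. -/
def IsHom (e : BZF → BZF) : Prop := ∀ x y : BZF, e (bzMul x y) = bzMul (e x) (e y)

/-- The distinguished idempotent `(0,0,[0))`. -/
def c0 : BZF := (0, 0, 0)

/-- The map `α_{k,p}` on `B_Z^{F²}`. -/
def alphaMap (k p : ℤ) (x : BZF) : BZF :=
  if x.2.2 = 0 then (k * x.1, k * x.2.1, 0) else (p + k * x.1, p + k * x.2.1, 1)


/-- The map `β_{k,p}` on `B_Z^{F²}`. -/
def betaMap (k p : ℤ) (x : BZF) : BZF :=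
  if x.2.2 = 0 then (k * x.1, k * x.2.1, 0) else (p + k * x.1, p + k * x.2.1, 0)

lemma bz_fv0 : (((0 : Fin 2) : ℕ) : ℤ) = 0 := rfl
lemma bz_fv1 : (((1 : Fin 2) : ℕ) : ℤ) = 1 := rfl
lemma bz_fv_nonneg (f : Fin 2) : 0 ≤ ((f : ℕ) : ℤ) := Int.natCast_nonneg _
lemma bz_fv_le (f : Fin 2) : ((f : ℕ) : ℤ) ≤ 1 := by have := f.is_lt; omega
lemma bz_fin_eq_iff {x y : Fin 2} : x = y ↔ ((x : ℕ) : ℤ) = ((y : ℕ) : ℤ) := by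
  constructor
  · rintro rfl; rfl
  · intro h; exact Fin.ext (by exact_mod_cast h)
lemma bz_fam_val (V : ℤ) : ((famOfInt V : ℕ) : ℤ) = if V ≤ 0 then 0 else 1 := by
  unfold famOfInt; split_ifs <;> rfl
lemma bz_fam_zero {V : ℤ} (h : V ≤ 0) : famOfInt V = 0 := by
  unfold famOfInt; rw [if_pos h]
lemma bz_fam_one {V : ℤ} (h : 1 ≤ V) : famOfInt V = 1 := by
  unfold famOfInt; rw [if_neg (by omega)]
lemma bz_fam_fv (f : Fin 2) : famOfInt ((f : ℕ) : ℤ) = f := by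
  rw [bz_fin_eq_iff, bz_fam_val]
  have := bz_fv_nonneg f; have := bz_fv_le f
  split_ifs <;> omega
lemma bz_eval (i1 j1 : ℤ) (f1 : Fin 2) (i2 j2 : ℤ) (f2 : Fin 2) :
    bzMul (i1, j1, f1) (i2, j2, f2) =
      if j1 ≤ i2 then
        (i1 - j1 + i2, j2, famOfInt (max (max (((f1 : ℕ) : ℤ) + j1 - i2) 0) ((f2 : ℕ) : ℤ)))
      else
        (i1, j1 - i2 + j2, famOfInt (max ((f1 : ℕ) : ℤ) (max (((f2 : ℕ) : ℤ) + i2 - j1) 0))) := rfl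
lemma bz_ev00 {i1 j1 i2 j2 : ℤ} (h : j1 ≤ i2) :
    bzMul (i1, j1, 0) (i2, j2, 0) = (i1 - j1 + i2, j2, 0) := by
  rw [bz_eval, if_pos h, bz_fv0]; congr 2; exact bz_fam_zero (by omega)
lemma bz_ev00' {i1 j1 i2 j2 : ℤ} (h : i2 < j1) :
    bzMul (i1, j1, 0) (i2, j2, 0) = (i1, j1 - i2 + j2, 0) := by
  rw [bz_eval, if_neg (by omega), bz_fv0]; congr 2; exact bz_fam_zero (by omega)

-- turns a Fin-2 component equation with famOfInt into integer facts
lemma bz_fam_eq {V : ℤ} {g : Fin 2} (h : famOfInt V = g) :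
    (V ≤ 0 ∧ ((g : ℕ) : ℤ) = 0) ∨ (1 ≤ V ∧ ((g : ℕ) : ℤ) = 1) := by
  rw [bz_fin_eq_iff, bz_fam_val] at h
  split_ifs at h
  · exact Or.inl ⟨by assumption, h.symm⟩
  · exact Or.inr ⟨by omega, h.symm⟩

lemma bz_phase1 (e : BZF → BZF) (he : IsHom e) (hinj : Function.Injective e)
    (h0 : e c0 = c0) :
    ∃ k : ℤ, 1 ≤ k ∧ e (1, 0, 0) = (k, 0, 0) ∧ e (0, 1, 0) = (0, k, 0) := by
  have h0' : e (0, 0, 0) = ((0 : ℤ), (0 : ℤ), (0 : Fin 2)) := h0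
  rcases hP : e (1, 0, 0) with ⟨a, b, f⟩
  rcases hQ : e (0, 1, 0) with ⟨c, d, g⟩
  -- b ≥ 0
  have r1 := he (1, 0, 0) (0, 0, 0)
  rw [show bzMul ((1:ℤ), (0:ℤ), (0:Fin 2)) (0, 0, 0) = (1, 0, 0) from bz_ev00 le_rfl,
    hP, h0', bz_eval] at r1
  have hb : 0 ≤ b := by
    by_contra hb
    rw [if_pos (by omega)] at r1
    simp only [Prod.mk.injEq] at r1
    omega
  -- c ≥ 0
  have r2 := he (0, 0, 0) (0, 1, 0)
  rw [show bzMul ((0:ℤ), (0:ℤ), (0:Fin 2)) (0, 1, 0) = (0, 1, 0) from bz_ev00 le_rfl,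
    hQ, h0', bz_eval] at r2
  have hc : 0 ≤ c := by
    by_contra hc
    rw [if_neg (by omega)] at r2
    simp only [Prod.mk.injEq] at r2
    omega
  -- QP = c0
  have r3 := he (0, 1, 0) (1, 0, 0)
  rw [show bzMul ((0:ℤ), (1:ℤ), (0:Fin 2)) (1, 0, 0) = (0, 0, 0) from bz_ev00 le_rfl,
    hP, hQ, h0', bz_eval] at r3
  have hgnn := bz_fv_nonneg g; have hfnn := bz_fv_nonneg f
  have key : b = 0 ∧ ((f : ℕ) : ℤ) = 0 ∧ c = d - a ∧ ((g : ℕ) : ℤ) + d ≤ a := by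
    split_ifs at r3 with hda
    · simp only [Prod.mk.injEq] at r3
      obtain ⟨e1, e2, e3⟩ := r3
      rcases bz_fam_eq e3.symm with ⟨h1, h2⟩ | ⟨h1, h2⟩
      · rw [bz_fv0] at h2; refine ⟨e2.symm, by omega, by omega, by omega⟩
      · rw [bz_fv0] at h2; omega
    · simp only [Prod.mk.injEq] at r3
      omega
  obtain ⟨hb0, hf0, hcda, hgd⟩ := key
  have hda : d = a := by omega
  have hg0 : ((g : ℕ) : ℤ) = 0 := by omega
  have hc0 : c = 0 := by omega
  have hf : f = 0 := by rw [bz_fin_eq_iff, hf0, bz_fv0]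
  have hg : g = 0 := by rw [bz_fin_eq_iff, hg0, bz_fv0]
  subst hb0 hf hg
  rw [hc0, hda] at hQ
  -- now P = (a,0,0), Q = (0,a,0)
  have hane : a ≠ 0 := by
    intro h
    subst h
    have : ((1:ℤ), (0:ℤ), (0:Fin 2)) = ((0:ℤ), (0:ℤ), (0:Fin 2)) := hinj (hP.trans h0'.symm)
    simp at this
  have hapos : 1 ≤ a := by
    by_contra hneg
    have ha : a < 0 := by omega
    -- P² = e(2,0,0) = (a,-a,0), Q² = e(0,2,0) = (-a,a,0), Q²P² = c0
    have r4 := he (1, 0, 0) (1, 0, 0)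
    rw [show bzMul ((1:ℤ), (0:ℤ), (0:Fin 2)) (1, 0, 0) = (2, 0, 0) from bz_ev00 (by omega),
      hP, bz_ev00' (by omega)] at r4
    have r5 := he (0, 1, 0) (0, 1, 0)
    rw [show bzMul ((0:ℤ), (1:ℤ), (0:Fin 2)) (0, 1, 0) = (0, 2, 0) from bz_ev00' (by omega),
      hQ, bz_ev00 (by omega)] at r5
    have r6 := he (0, 2, 0) (2, 0, 0)
    rw [show bzMul ((0:ℤ), (2:ℤ), (0:Fin 2)) (2, 0, 0) = (0, 0, 0) from bz_ev00 (by omega),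
      r4, r5, h0', bz_ev00 (by omega)] at r6
    simp only [Prod.mk.injEq] at r6
    omega
  refine ⟨a, hapos, rfl, ?_⟩
  simp only [Prod.mk.injEq]
  exact ⟨hc0, hda, trivial⟩

lemma bz_phase2A (e : BZF → BZF) (he : IsHom e) {k : ℤ} (hk : 1 ≤ k)
    (hP : e (1, 0, 0) = (k, 0, 0)) (h0' : e ((0:ℤ), (0:ℤ), (0:Fin 2)) = (0, 0, 0)) :
    ∀ n : ℕ, e ((n : ℤ), 0, 0) = (k * n, 0, 0) := by
  intro n
  induction n with
  | zero => simpa using h0'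
  | succ n ih =>
    have r := he ((n : ℤ), 0, 0) (1, 0, 0)
    rw [bz_ev00 (by omega), ih, hP, bz_ev00 (by omega)] at r
    have h2 : ((n + 1 : ℕ) : ℤ) = (n : ℤ) - 0 + 1 := by push_cast; ring
    rw [h2, r]
    have h4 : k * ((n:ℤ) - 0 + 1) = k * (n:ℤ) - 0 + k := by ring
    rw [h4]

lemma bz_phase2Q (e : BZF → BZF) (he : IsHom e) {k : ℤ} (hk : 1 ≤ k)
    (hQ : e (0, 1, 0) = (0, k, 0)) (h0' : e ((0:ℤ), (0:ℤ), (0:Fin 2)) = (0, 0, 0)) :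
    ∀ n : ℕ, e (0, (n : ℤ), 0) = (0, k * n, 0) := by
  intro n
  induction n with
  | zero => simpa using h0'
  | succ n ih =>
    have r := he (0, 1, 0) (0, (n : ℤ), 0)
    rw [bz_ev00' (by omega), ih, hQ, bz_ev00' (by omega)] at r
    have h2 : ((n + 1 : ℕ) : ℤ) = 1 - 0 + (n : ℤ) := by push_cast; ring
    rw [h2, r]
    have h4 : k * (1 - 0 + (n:ℤ)) = k - 0 + k * (n:ℤ) := by ring
    rw [h4]

lemma bz_phase3 (e : BZF → BZF) (he : IsHom e)
    (h0' : e ((0:ℤ), (0:ℤ), (0:Fin 2)) = (0, 0, 0)) {k : ℤ} (hk : 1 ≤ k)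
    (hA : ∀ n : ℕ, e ((n : ℤ), 0, 0) = (k * n, 0, 0))
    (n : ℕ) (hn : 1 ≤ n) :
    e (-(n : ℤ), 0, 0) = (k * -(n : ℤ), 0, 0) ∧ e (0, -(n : ℤ), 0) = (0, k * -(n : ℤ), 0) := by
  have hN : 1 ≤ (n : ℤ) := by exact_mod_cast hn
  set N := (n : ℤ) with hNdef
  set K := k * N with hKdef
  have hK1 : 1 ≤ K := by
    have h := mul_le_mul hk hN zero_le_one (by omega)
    simpa using h
  rcases hB : e (-N, 0, 0) with ⟨s, t, g⟩
  rcases hB' : e (0, -N, 0) with ⟨u, v, h⟩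
  have hgnn := bz_fv_nonneg g; have hgle := bz_fv_le g
  have hhnn := bz_fv_nonneg h; have hhle := bz_fv_le h
  -- r1 : t ≥ 0
  have r1 := he (-N, 0, 0) (0, 0, 0)
  rw [show bzMul (-N, (0:ℤ), (0:Fin 2)) (0, 0, 0) = (-N, 0, 0) from by
      rw [bz_ev00 le_rfl]; norm_num, hB, h0', bz_eval] at r1
  have ht0 : 0 ≤ t := by
    by_contra hcon
    rw [if_pos (by omega)] at r1
    simp only [Prod.mk.injEq] at r1
    omega
  -- r2 : s = t - K, gv + t ≤ K
  have hAN : e (N, 0, 0) = (K, 0, 0) := hA n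
  have r2 := he (-N, 0, 0) (N, 0, 0)
  rw [show bzMul (-N, (0:ℤ), (0:Fin 2)) (N, 0, 0) = ((0:ℤ), (0:ℤ), (0:Fin 2)) from by
      rw [bz_ev00 (by omega)]; norm_num, hB, hAN, h0', bz_eval] at r2
  have hstg : s = t - K ∧ ((g : ℕ) : ℤ) + t ≤ K := by
    split_ifs at r2 with hc
    · simp only [Prod.mk.injEq] at r2
      obtain ⟨e1, e2, e3⟩ := r2
      rcases bz_fam_eq e3.symm with ⟨h1, h2⟩ | ⟨h1, h2⟩
      · exact ⟨by omega, by omega⟩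
      · rw [bz_fv0] at h2; omega
    · simp only [Prod.mk.injEq] at r2
      obtain ⟨e1, e2, e3⟩ := r2
      omega
  obtain ⟨hs, hgt⟩ := hstg
  -- r3 : v ≤ 0, u = K + v, hv + v ≤ 0
  have r3 := he (0, -N, 0) (0, 0, 0)
  rw [show bzMul ((0:ℤ), -N, (0:Fin 2)) (0, 0, 0) = (N, 0, 0) from by
      rw [bz_ev00 (by omega)]; norm_num, hB', hAN, bz_eval, h0'] at r3
  have huv : v ≤ 0 ∧ u = K + v ∧ ((h : ℕ) : ℤ) + v ≤ 0 := by
    split_ifs at r3 with hc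
    · simp only [Prod.mk.injEq] at r3
      obtain ⟨e1, e2, e3⟩ := r3
      rcases bz_fam_eq e3.symm with ⟨h1, h2⟩ | ⟨h1, h2⟩
      · exact ⟨hc, by omega, by omega⟩
      · rw [bz_fv0] at h2; omega
    · simp only [Prod.mk.injEq] at r3
      obtain ⟨e1, e2, e3⟩ := r3
      omega
  obtain ⟨hv0, hu, hhv⟩ := huv
  -- r4 : t = 0, g = 0, v ≤ -K, hv + v + K ≤ 0
  have r4 := he (0, -N, 0) (-N, 0, 0)
  rw [show bzMul ((0:ℤ), -N, (0:Fin 2)) (-N, 0, 0) = ((0:ℤ), (0:ℤ), (0:Fin 2)) from by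
      rw [bz_ev00 le_rfl]; norm_num, hB', hB, h0', bz_eval] at r4
  have key4 : t = 0 ∧ ((g : ℕ) : ℤ) = 0 ∧ v ≤ -K ∧ ((h : ℕ) : ℤ) + v + K ≤ 0 := by
    split_ifs at r4 with hc
    · simp only [Prod.mk.injEq] at r4
      obtain ⟨e1, e2, e3⟩ := r4
      rcases bz_fam_eq e3.symm with ⟨h1, h2⟩ | ⟨h1, h2⟩
      · refine ⟨e2.symm, by omega, by omega, by omega⟩
      · rw [bz_fv0] at h2; omega
    · simp only [Prod.mk.injEq] at r4
      obtain ⟨e1, e2, e3⟩ := r4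
      rcases bz_fam_eq e3.symm with ⟨h1, h2⟩ | ⟨h1, h2⟩
      · refine ⟨by omega, by omega, by omega, by omega⟩
      · rw [bz_fv0] at h2; omega
  obtain ⟨ht, hg, hvK, hhvK⟩ := key4
  -- r5/r6 : v ≥ -K
  have r5 := he (0, -N, 0) (0, -N, 0)
  rw [show bzMul ((0:ℤ), -N, (0:Fin 2)) (0, -N, 0) = (N, -N, 0) from by
      rw [bz_ev00 (by omega)]; norm_num, hB'] at r5
  have r6 := he (N, 0, 0) (0, -N, 0)
  rw [show bzMul (N, (0:ℤ), (0:Fin 2)) (0, -N, 0) = (N, -N, 0) from by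
      rw [bz_ev00 le_rfl]; norm_num, hB', hAN] at r6
  have r56 : bzMul (u, v, h) (u, v, h) = bzMul (K, 0, 0) (u, v, h) := by
    rw [← r5, ← r6]
  rw [bz_eval, bz_eval, if_pos (by omega : v ≤ u)] at r56
  have hvKe : v = -K := by
    split_ifs at r56 with hc
    · omega
    · simp only [Prod.mk.injEq] at r56
      obtain ⟨e1, e2, e3⟩ := r56
      omega
  have hh0 : ((h : ℕ) : ℤ) = 0 := by omega
  have hKneg : k * -N = -K := by rw [hKdef]; ring
  rw [hKneg]
  constructor
  · simp only [Prod.mk.injEq]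
    refine ⟨by omega, by omega, ?_⟩
    rw [bz_fin_eq_iff, hg, bz_fv0]
  · simp only [Prod.mk.injEq]
    refine ⟨by omega, by omega, ?_⟩
    rw [bz_fin_eq_iff, hh0, bz_fv0]

lemma bz_fin2_cases (f : Fin 2) : f = 0 ∨ f = 1 := by
  have := bz_fv_nonneg f; have := bz_fv_le f
  rcases (by omega : ((f : ℕ) : ℤ) = 0 ∨ ((f : ℕ) : ℤ) = 1) with h | h
  · exact Or.inl (by rw [bz_fin_eq_iff, h, bz_fv0])
  · exact Or.inr (by rw [bz_fin_eq_iff, h, bz_fv1])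


lemma bz_phase4 (e : BZF → BZF) (he : IsHom e)
    (h0' : e ((0:ℤ), (0:ℤ), (0:Fin 2)) = (0, 0, 0)) {k : ℤ} (hk : 1 ≤ k)
    (hA : ∀ n : ℕ, e ((n : ℤ), 0, 0) = (k * n, 0, 0))
    (hQn : ∀ n : ℕ, e (0, (n : ℤ), 0) = (0, k * n, 0))
    (hB : ∀ n : ℕ, 1 ≤ n →
      e (-(n : ℤ), 0, 0) = (k * -(n : ℤ), 0, 0) ∧ e (0, -(n : ℤ), 0) = (0, k * -(n : ℤ), 0)) :
    ∀ i j : ℤ, e (i, j, 0) = (k * i, k * j, 0) := by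
  have hEi : ∀ i : ℤ, e (i, 0, 0) = (k * i, 0, 0) := by
    intro i
    obtain ⟨n, rfl | rfl⟩ := Int.eq_nat_or_neg i
    · exact hA n
    · rcases Nat.eq_zero_or_pos n with rfl | hn
      · simpa using h0'
      · exact (hB n hn).1
  have hEj : ∀ j : ℤ, e (0, j, 0) = (0, k * j, 0) := by
    intro j
    obtain ⟨n, rfl | rfl⟩ := Int.eq_nat_or_neg j
    · exact hQn n
    · rcases Nat.eq_zero_or_pos n with rfl | hn
      · simpa using h0'
      · exact (hB n hn).2
  intro i j
  have r := he (i, 0, 0) (0, j, 0)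
  rw [show bzMul (i, (0:ℤ), (0:Fin 2)) (0, j, 0) = (i, j, 0) from by
      rw [bz_ev00 le_rfl]; norm_num,
    hEi, hEj,
    show bzMul (k * i, (0:ℤ), (0:Fin 2)) (0, k * j, 0) = (k * i, k * j, 0) from by
      rw [bz_ev00 le_rfl]; norm_num] at r
  exact r

lemma bz_phase5 (e : BZF → BZF) (he : IsHom e) (hinj : Function.Injective e)
    (h0' : e ((0:ℤ), (0:ℤ), (0:Fin 2)) = (0, 0, 0)) {k : ℤ} (hk : 1 ≤ k)
    (hE0 : ∀ i j : ℤ, e (i, j, 0) = (k * i, k * j, 0)) :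
    ∃ m : ℤ, ∃ g : Fin 2, e (0, 0, 1) = (m, m, g) ∧ 0 ≤ m ∧ ((g : ℕ) : ℤ) + m ≤ k ∧
      ¬(m = 0 ∧ ((g : ℕ) : ℤ) = 0) ∧ ¬(m = k ∧ ((g : ℕ) : ℤ) = 0) := by
  rcases hM : e (0, 0, 1) with ⟨m1, m2, g⟩
  have hgnn := bz_fv_nonneg g; have hgle := bz_fv_le g
  -- idempotent: m1 = m2
  have rI := he (0, 0, 1) (0, 0, 1)
  rw [show bzMul ((0:ℤ), (0:ℤ), (1:Fin 2)) (0, 0, 1) = ((0:ℤ), (0:ℤ), (1:Fin 2)) from by decide,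
    hM, bz_eval] at rI
  have hm12 : m1 = m2 := by
    split_ifs at rI with hc
    · simp only [Prod.mk.injEq] at rI
      omega
    · simp only [Prod.mk.injEq] at rI
      obtain ⟨e1, e2, e3⟩ := rI
      omega
  -- 0 ≤ m1
  have r0 := he (0, 0, 0) (0, 0, 1)
  rw [show bzMul ((0:ℤ), (0:ℤ), (0:Fin 2)) (0, 0, 1) = ((0:ℤ), (0:ℤ), (1:Fin 2)) from by decide,
    hM, h0', bz_eval] at r0
  have hm0 : 0 ≤ m1 := by
    split_ifs at r0 with hc
    · exact hc
    · simp only [Prod.mk.injEq] at r0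
      obtain ⟨e1, e2, e3⟩ := r0
      omega
  -- gv + m2 ≤ k
  have hE11 : e (1, 1, 0) = (k, k, 0) := by have := hE0 1 1; simpa using this
  have r1 := he (0, 0, 1) (1, 1, 0)
  rw [show bzMul ((0:ℤ), (0:ℤ), (1:Fin 2)) (1, 1, 0) = ((1:ℤ), (1:ℤ), (0:Fin 2)) from by decide,
    hM, hE11, bz_eval] at r1
  have hmk : ((g : ℕ) : ℤ) + m2 ≤ k := by
    split_ifs at r1 with hc
    · simp only [Prod.mk.injEq] at r1
      obtain ⟨e1, e2, e3⟩ := r1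
      rcases bz_fam_eq e3.symm with ⟨h1, h2⟩ | ⟨h1, h2⟩
      · omega
      · rw [bz_fv0] at h2; omega
    · simp only [Prod.mk.injEq] at r1
      obtain ⟨e1, e2, e3⟩ := r1
      omega
  -- injectivity facts
  have hne0 : ¬(m2 = 0 ∧ ((g : ℕ) : ℤ) = 0) := by
    rintro ⟨rfl, hg⟩
    have hgz : g = 0 := by rw [bz_fin_eq_iff, hg, bz_fv0]
    subst hgz
    have : ((0:ℤ), (0:ℤ), (1:Fin 2)) = ((0:ℤ), (0:ℤ), (0:Fin 2)) := by
      apply hinj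
      rw [h0', hM, hm12]
    simp at this
  have hnek : ¬(m2 = k ∧ ((g : ℕ) : ℤ) = 0) := by
    rintro ⟨rfl, hg⟩
    have hgz : g = 0 := by rw [bz_fin_eq_iff, hg, bz_fv0]
    subst hgz
    have : ((0:ℤ), (0:ℤ), (1:Fin 2)) = ((1:ℤ), (1:ℤ), (0:Fin 2)) := by
      apply hinj
      rw [hE11, hM, hm12]
    simp at this
  exact ⟨m2, g, by rw [hm12], by omega, hmk, hne0, hnek⟩

lemma bz_phase6 (e : BZF → BZF) (he : IsHom e) {k m : ℤ} {g : Fin 2} (hk : 1 ≤ k)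
    (hE0 : ∀ i j : ℤ, e (i, j, 0) = (k * i, k * j, 0))
    (hM : e (0, 0, 1) = (m, m, g)) (hm0 : 0 ≤ m) :
    ∀ i j : ℤ, e (i, j, 1) = (m + k * i, m + k * j, g) := by
  have hgnn := bz_fv_nonneg g; have hgle := bz_fv_le g
  -- step a : e (i, 0, 1) = (k*i + m, m, g)
  have ha : ∀ i : ℤ, e (i, 0, 1) = (k * i + m, m, g) := by
    intro i
    have r := he (i, 0, 0) (0, 0, 1)
    rw [show bzMul (i, (0:ℤ), (0:Fin 2)) ((0:ℤ), (0:ℤ), (1:Fin 2)) = (i, 0, 1) from by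
        rw [bz_eval, if_pos le_rfl, bz_fv0, bz_fv1]
        norm_num [bz_fam_one],
      hE0, hM] at r
    rw [mul_zero] at r
    rw [bz_eval, if_pos hm0, bz_fv0] at r
    have hfl : famOfInt (((0:ℤ) + 0 - m) ⊔ 0 ⊔ ((g : ℕ) : ℤ)) = g := by
      rw [(by omega : ((0:ℤ) + 0 - m) ⊔ 0 ⊔ ((g:ℕ):ℤ) = ((g:ℕ):ℤ))]
      exact bz_fam_fv g
    rw [hfl] at r
    rw [r]
    have : k * i - 0 + m = k * i + m := by ring
    rw [this]
  intro i j
  have r := he (i, 0, 1) (0, j, 0)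
  rw [show bzMul (i, (0:ℤ), (1:Fin 2)) ((0:ℤ), j, (0:Fin 2)) = (i, j, 1) from by
      rw [bz_eval, if_pos le_rfl, bz_fv0, bz_fv1]
      norm_num [bz_fam_one],
    ha, hE0, bz_eval] at r
  have hflag : ∀ V : ℤ, V = ((g : ℕ) : ℤ) → famOfInt V = g := by
    intro V hV
    rw [hV]
    exact bz_fam_fv g
  rcases eq_or_lt_of_le hm0 with hmz | hmpos
  · rw [if_pos (by omega), bz_fv0] at r
    rw [r]
    simp only [Prod.mk.injEq]
    exact ⟨by omega, by omega, hflag _ (by omega)⟩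
  · rw [if_neg (by omega), bz_fv0] at r
    rw [r]
    simp only [Prod.mk.injEq]
    exact ⟨by ring, by omega, hflag _ (by omega)⟩

/-- Every injective `(0,0,[0))`-endomorphism of `B_Z^{F²}` equals some `α_{k,p}`
or some `β_{k,p}`. -/
theorem injective_endo_fixing_c0_classification (e : BZF → BZF)
    (he : IsHom e) (hinj : Function.Injective e) (h0 : e c0 = c0) :
    (∃ k p : ℤ, 0 < k ∧ 0 ≤ p ∧ p < k ∧ e = alphaMap k p) ∨
    (∃ k p : ℤ, 2 ≤ k ∧ 1 ≤ p ∧ p < k ∧ e = betaMap k p) := by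
  have h0' : e ((0:ℤ), (0:ℤ), (0:Fin 2)) = (0, 0, 0) := h0
  obtain ⟨k, hk, hP, hQ⟩ := bz_phase1 e he hinj h0
  have hA := bz_phase2A e he hk hP h0'
  have hQn := bz_phase2Q e he hk hQ h0'
  have hB := bz_phase3 e he h0' hk hA
  have hE0 := bz_phase4 e he h0' hk hA hQn hB
  obtain ⟨m, g, hM, hm0, hmk, hne0, hnek⟩ := bz_phase5 e he hinj h0' hk hE0
  have hE1 := bz_phase6 e he hk hE0 hM hm0
  have hgnn := bz_fv_nonneg g; have hgle := bz_fv_le g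
  rcases bz_fin2_cases g with rfl | rfl
  · -- g = 0 : beta
    rw [bz_fv0] at hmk hne0 hnek
    right
    refine ⟨k, m, by omega, by omega, by omega, ?_⟩
    funext x
    rcases x with ⟨i, j, f⟩
    rcases bz_fin2_cases f with rfl | rfl
    · rw [hE0 i j]
      simp [betaMap]
    · rw [hE1 i j]
      simp [betaMap]
  · -- g = 1 : alpha
    rw [bz_fv1] at hmk
    left
    refine ⟨k, m, by omega, hm0, by omega, ?_⟩
    funext x
    rcases x with ⟨i, j, f⟩
    rcases bz_fin2_cases f with rfl | rfl
    · rw [hE0 i j]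
      simp [alphaMap]
    · rw [hE1 i j]
      simp [alphaMap]
end

section
/- For any endomorphism e of B_Z^{F²} there exist an endomorphism e₀ of B_Z^{F²} with (0,0,[0))e₀ = (0,0,[0)) and an automorphism a of B_Z^{F²} such that e = e₀ ∘ a (first apply e₀, then a). Moreover, if e is injective then e₀ is injective. -/
/- ---------- auxiliary machinery ---------- -/

/-- Translation automorphism. -/
def trn (n : ℤ) : BZF → BZF := fun x => (x.1 + n, x.2.1 + n, x.2.2)

/-- The "half-shift" automorphism: `(i,j,0) ↦ (i,j,1)` and `(i,j,1) ↦ (i+1,j+1,0)`. -/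
def sh : BZF → BZF :=
  fun x => (x.1 + ((x.2.2 : ℕ) : ℤ), x.2.1 + ((x.2.2 : ℕ) : ℤ), famOfInt (1 - ((x.2.2 : ℕ) : ℤ)))

/-- Inverse of `sh`. -/
def shInv : BZF → BZF :=
  fun x => (x.1 - 1 + ((x.2.2 : ℕ) : ℤ), x.2.1 - 1 + ((x.2.2 : ℕ) : ℤ),
    famOfInt (1 - ((x.2.2 : ℕ) : ℤ)))

lemma bz_le {i1 j1 i2 j2 : ℤ} {q1 q2 : Fin 2} (h : j1 ≤ i2) :
    bzMul (i1, j1, q1) (i2, j2, q2) =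
      (i1 - j1 + i2, j2, famOfInt (max (max (((q1 : ℕ) : ℤ) + j1 - i2) 0) ((q2 : ℕ) : ℤ))) := by
  simp only [bzMul]; rw [if_pos h]

lemma bz_gt {i1 j1 i2 j2 : ℤ} {q1 q2 : Fin 2} (h : ¬ j1 ≤ i2) :
    bzMul (i1, j1, q1) (i2, j2, q2) =
      (i1, j1 - i2 + j2, famOfInt (max ((q1 : ℕ) : ℤ) (max (((q2 : ℕ) : ℤ) + i2 - j1) 0))) := by
  simp only [bzMul]; rw [if_neg h]

lemma sh_apply (i j : ℤ) (q : Fin 2) :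
    sh (i, j, q) = (i + ((q : ℕ) : ℤ), j + ((q : ℕ) : ℤ), famOfInt (1 - ((q : ℕ) : ℤ))) := rfl

lemma fam_val (v : ℤ) : ((famOfInt v : ℕ) : ℤ) = if v ≤ 0 then 0 else 1 := by
  simp only [famOfInt]; split_ifs <;> rfl

lemma hom_trn (n : ℤ) : IsHom (trn n) := by
  rintro ⟨i1, j1, q1⟩ ⟨i2, j2, q2⟩
  simp only [bzMul, trn]
  split_ifs with h1 h2 h2 <;> [skip; omega; omega; skip] <;>
    simp only [h2, ↓reduceIte] <;>
    exact Prod.ext (by ring) (Prod.ext (by ring) (by dsimp only; congr 1; omega))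

set_option maxHeartbeats 1000000 in
lemma hom_sh : IsHom sh := by
  rintro ⟨i1, j1, q1⟩ ⟨i2, j2, q2⟩
  by_cases h : j1 ≤ i2
  · rw [bz_le h, sh_apply, sh_apply, sh_apply]
    by_cases h2 : j1 + ((q1 : ℕ) : ℤ) ≤ i2 + ((q2 : ℕ) : ℤ)
    · rw [bz_le h2]
      refine Prod.ext ?_ (Prod.ext ?_ ?_) <;>
        simp only [fam_val, famOfInt] <;> split_ifs <;> first | rfl | omega
    · rw [bz_gt h2]
      refine Prod.ext ?_ (Prod.ext ?_ ?_) <;>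
        simp only [fam_val, famOfInt] <;> split_ifs <;> first | rfl | omega
  · rw [bz_gt h, sh_apply, sh_apply, sh_apply]
    by_cases h2 : j1 + ((q1 : ℕ) : ℤ) ≤ i2 + ((q2 : ℕ) : ℤ)
    · rw [bz_le h2]
      refine Prod.ext ?_ (Prod.ext ?_ ?_) <;>
        simp only [fam_val, famOfInt] <;> split_ifs <;> first | rfl | omega
    · rw [bz_gt h2]
      refine Prod.ext ?_ (Prod.ext ?_ ?_) <;>
        simp only [fam_val, famOfInt] <;> split_ifs <;> first | rfl | omega

lemma shInv_sh (x : BZF) : shInv (sh x) = x := by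
  obtain ⟨i, j, q⟩ := x
  fin_cases q <;>
    simp [sh, shInv, famOfInt]

lemma sh_shInv (x : BZF) : sh (shInv x) = x := by
  obtain ⟨i, j, q⟩ := x
  fin_cases q <;>
    simp [sh, shInv, famOfInt]

lemma trn_trn (n : ℤ) (x : BZF) : trn (-n) (trn n x) = x := by
  simp [trn]

lemma hom_comp {f g : BZF → BZF} (hf : IsHom f) (hg : IsHom g) : IsHom (g ∘ f) := by
  intro x y
  simp only [Function.comp_apply]
  rw [hf, hg]

/-- Every endomorphism `e` of `B_Z^{F²}` factors as `e = e₀ ∘ a` (first `e₀`, then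
`a`) with `e₀` a `(0,0,[0))`-endomorphism and `a` an automorphism; if `e` is
injective then so is `e₀`. -/
theorem endo_factorization (e : BZF → BZF) (he : IsHom e) :
    ∃ e₀ a : BZF → BZF,
      IsHom e₀ ∧ e₀ c0 = c0 ∧
      IsHom a ∧ Function.Bijective a ∧
      (∀ x : BZF, e x = a (e₀ x)) ∧
      (Function.Injective e → Function.Injective e₀) := by
  -- `e c0` is idempotent
  have hc : bzMul c0 c0 = c0 := by
    simp [bzMul, c0, famOfInt]
  have hidem : bzMul (e c0) (e c0) = e c0 := by
    rw [← he, hc]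
  rcases hz : e c0 with ⟨i, j, q⟩
  rw [hz] at hidem
  have hij : i = j := by
    by_cases h : j ≤ i
    · rw [bz_le h] at hidem
      have := congrArg Prod.fst hidem
      simp at this; omega
    · rw [bz_gt h] at hidem
      have := congrArg (fun z : BZF => z.2.1) hidem
      simp at this; omega
  subst hij
  -- choose the automorphism `a` with `a c0 = e c0`
  have hq : q = 0 ∨ q = 1 := by omega
  rcases hq with hq | hq <;> subst hq
  · -- a = trn i, inverse b = trn (-i)
    refine ⟨fun x => trn (-i) (e x), trn i, ?_, ?_, hom_trn i, ?_, ?_, ?_⟩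
    · intro x y
      show trn (-i) (e (bzMul x y)) = bzMul (trn (-i) (e x)) (trn (-i) (e y))
      rw [he]
      exact hom_trn (-i) _ _
    · show trn (-i) (e c0) = c0
      rw [hz]; simp [trn, c0]
    · exact Function.bijective_iff_has_inverse.mpr
        ⟨trn (-i), fun x => by simp [trn], fun x => by simp [trn]⟩
    · intro x
      simp [trn]
    · intro hinj x y hxy
      apply hinj
      have := congrArg (trn i) hxy
      simpa [trn] using this
  · -- a = sh ∘ trn i, inverse b = trn (-i) ∘ shInv
    refine ⟨fun x => trn (-i) (shInv (e x)), fun x => sh (trn i x), ?_, ?_, ?_, ?_, ?_, ?_⟩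
    · intro x y
      show trn (-i) (shInv (e (bzMul x y))) =
        bzMul (trn (-i) (shInv (e x))) (trn (-i) (shInv (e y)))
      rw [he]
      have h1 := hom_sh (e x) (e y)
      have h2 : ∀ u v : BZF, shInv (bzMul u v) = bzMul (shInv u) (shInv v) := by
        intro u v
        have := hom_sh (shInv u) (shInv v)
        rw [sh_shInv, sh_shInv] at this
        rw [← this, shInv_sh]
      rw [h2]
      exact hom_trn (-i) _ _
    · show trn (-i) (shInv (e c0)) = c0
      rw [hz]
      simp [trn, shInv, c0, famOfInt]
    · exact hom_comp (hom_trn i) hom_sh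
    · exact Function.bijective_iff_has_inverse.mpr
        ⟨fun x => trn (-i) (shInv x),
         fun x => by
           show trn (-i) (shInv (sh (trn i x))) = x
           rw [shInv_sh]; simp [trn],
         fun x => by
           show sh (trn i (trn (-i) (shInv x))) = x
           have : trn i (trn (-i) (shInv x)) = shInv x := by simp [trn]
           rw [this, sh_shInv]⟩
    · intro x
      show e x = sh (trn i (trn (-i) (shInv (e x))))
      have : trn i (trn (-i) (shInv (e x))) = shInv (e x) := by simp [trn]
      rw [this, sh_shInv]
    · intro hinj x y hxy
      apply hinj
      have := congrArg (fun z => sh (trn i z)) hxy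
      simpa [trn, sh_shInv] using this
end

section
/- B_Z^{F²} is the increasing union over n ∈ ω of the subsemigroups B_Z^{F²}(−n,−n,0) = (−n,−n,[0)) · B_Z^{F²} · (−n,−n,[0)); moreover, for m, n ∈ ω, B_Z^{F²}(−n,−n,0) ⊆ B_Z^{F²}(−m,−m,0) if and only if m ≥ n. -/
/-- The subsemigroup `B_Z^{F²}(k,k,0) = (k,k,[0)) ⬝ B_Z^{F²} ⬝ (k,k,[0))`. -/
def Sk (k : ℤ) : Set BZF :=
  {z | ∃ x : BZF, z = bzMul (bzMul ((k, k, (0 : Fin 2)) : BZF) x) ((k, k, (0 : Fin 2)) : BZF)}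

set_option maxHeartbeats 2000000 in
/-- `Sk k` is exactly the set of triples whose first two coordinates are `≥ k`. -/
lemma mem_Sk_iff (k : ℤ) (z : BZF) : z ∈ Sk k ↔ k ≤ z.1 ∧ k ≤ z.2.1 := by
  constructor
  · rintro ⟨⟨i, j, q⟩, rfl⟩
    fin_cases q <;>
    · simp only [Sk, bzMul, famOfInt, Fin.isValue, Fin.val_zero, Fin.val_one,
        Nat.cast_zero, Nat.cast_one]
      split_ifs <;> simp_all <;> omega
  · rintro ⟨h1, h2⟩
    obtain ⟨i, j, q⟩ := z
    refine ⟨(i, j, q), ?_⟩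
    fin_cases q <;>
    · simp only [bzMul, famOfInt, Fin.isValue, Fin.val_zero, Fin.val_one,
        Nat.cast_zero, Nat.cast_one]
      split_ifs <;> simp_all <;> omega

/-- `B_Z^{F²}` is the increasing union of the subsemigroups `B_Z^{F²}(-n,-n,0)`,
`n ∈ ω`, and `B_Z^{F²}(-n,-n,0) ⊆ B_Z^{F²}(-m,-m,0)` iff `m ≥ n`. -/
theorem union_Sk_neg :
    (∀ z : BZF, ∃ n : ℕ, z ∈ Sk (-(n : ℤ))) ∧
    (∀ m n : ℕ, Sk (-(n : ℤ)) ⊆ Sk (-(m : ℤ)) ↔ n ≤ m) := by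
  constructor
  · intro z
    refine ⟨z.1.natAbs + z.2.1.natAbs, (mem_Sk_iff _ _).2 ?_⟩
    constructor <;> omega
  · intro m n
    constructor
    · intro h
      have hmem : ((-(n : ℤ), -(n : ℤ), (0 : Fin 2)) : BZF) ∈ Sk (-(n : ℤ)) :=
        (mem_Sk_iff _ _).2 ⟨le_refl _, le_refl _⟩
      have := (mem_Sk_iff _ _).1 (h hmem)
      simp only at this
      omega
    · intro h z hz
      rw [mem_Sk_iff] at hz ⊢
      omega
end
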